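/- Let W_1, ..., W_L be real matrices with every adjacent pair balanced (W_l W_l^T = W_{l+1}^T W_{l+1}), and let J = W_L ⋯ W_1. Then W_1^T W_1 is the unique positive semidefinite L-th root of J^T J; in particular (J^T J)^{1/L} = W_1^T W_1, where the L-th root is taken via the spectral calculus on the positive semidefinite matrix J^T J. -/

import Mathlib

open Matrix

/-- The product `W_{k-1} ⋯ W_1 W_0` of the first `k` layers of a deep linear network
(layers indexed from `0`). -/
def layerProd {d : ℕ → ℕ} (W : (l : ℕ) → Matrix (Fin (d (l + 1))) (Fin (d l)) ℝ) :
    (k : ℕ) → Matrix (Fin (d k)) (Fin (d 0)) ℝ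
  | 0 => 1
  | k + 1 => W k * layerProd W k

lemma sandwich_pow {p q : ℕ} (M : Matrix (Fin p) (Fin q) ℝ) (m : ℕ) :
    Mᵀ * (M * Mᵀ) ^ m * M = (Mᵀ * M) ^ (m + 1) := by
  induction m with
  | zero => simp
  | succ m ih =>
    calc Mᵀ * (M * Mᵀ) ^ (m + 1) * M
        = (Mᵀ * (M * Mᵀ) ^ m * M) * (Mᵀ * M) := by
          simp only [pow_succ, Matrix.mul_assoc]
      _ = (Mᵀ * M) ^ (m + 1) * (Mᵀ * M) := by rw [ih]
      _ = (Mᵀ * M) ^ (m + 1 + 1) := (pow_succ _ _).symm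

lemma psd_pow_root_cfc {n : ℕ} {L : ℕ} (hL : 1 ≤ L)
    {A : Matrix (Fin n) (Fin n) ℝ} (hA : A.PosSemidef) :
    cfc (fun x : ℝ => |x| ^ ((L : ℝ)⁻¹)) (A ^ L) = A := by
  have hA' : IsSelfAdjoint A := hA.isHermitian
  have hLpos : (0 : ℝ) < (L : ℝ)⁻¹ := by positivity
  have hf : Continuous fun x : ℝ => |x| ^ ((L : ℝ)⁻¹) := by
    rw [continuous_iff_continuousAt]
    intro x
    exact (Real.continuousAt_rpow_const _ _ (Or.inr hLpos.le)).comp continuous_abs.continuousAt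
  rw [← cfc_comp_pow (fun x : ℝ => |x| ^ ((L : ℝ)⁻¹)) L A (hf.continuousOn) hA']
  have hspec : ∀ x ∈ spectrum ℝ A, 0 ≤ x := by
    intro x hx
    rw [Matrix.IsHermitian.spectrum_real_eq_range_eigenvalues hA.isHermitian] at hx
    obtain ⟨i, rfl⟩ := hx
    exact hA.eigenvalues_nonneg i
  have : cfc (fun x : ℝ => |x ^ L| ^ ((L : ℝ)⁻¹)) A = cfc (id : ℝ → ℝ) A := by
    apply cfc_congr
    intro x hx
    have hx0 : 0 ≤ x := hspec x hx
    show |x ^ L| ^ ((L : ℝ)⁻¹) = x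
    rw [abs_of_nonneg (pow_nonneg hx0 L), ← Real.rpow_natCast x L, ← Real.rpow_mul hx0,
      mul_inv_cancel₀ (by positivity), Real.rpow_one]
  rw [this, cfc_id ℝ A hA']

theorem layerProd_key {d : ℕ → ℕ} {L : ℕ}
    (W : (l : ℕ) → Matrix (Fin (d (l + 1))) (Fin (d l)) ℝ)
    (hbal : ∀ l, l + 1 < L → W l * (W l)ᵀ = (W (l + 1))ᵀ * W (l + 1)) :
    ∀ k, k < L → ∀ m, (layerProd W k)ᵀ * ((W k)ᵀ * W k) ^ m * layerProd W k
      = ((W 0)ᵀ * W 0) ^ (m + k) := by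
  intro k
  induction k with
  | zero =>
    intro _ m
    simp [layerProd]
  | succ k ih =>
    intro hk m
    have hk' : k < L := Nat.lt_of_succ_lt hk
    have hb : W k * (W k)ᵀ = (W (k + 1))ᵀ * W (k + 1) := hbal k hk
    show (W k * layerProd W k)ᵀ * ((W (k + 1))ᵀ * W (k + 1)) ^ m * (W k * layerProd W k)
      = ((W 0)ᵀ * W 0) ^ (m + (k + 1))
    rw [← hb, Matrix.transpose_mul]
    calc (layerProd W k)ᵀ * (W k)ᵀ * (W k * (W k)ᵀ) ^ m * (W k * layerProd W k)
        = (layerProd W k)ᵀ * ((W k)ᵀ * (W k * (W k)ᵀ) ^ m * W k) * layerProd W k := by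
          simp only [Matrix.mul_assoc]
      _ = (layerProd W k)ᵀ * ((W k)ᵀ * W k) ^ (m + 1) * layerProd W k := by
          rw [sandwich_pow]
      _ = ((W 0)ᵀ * W 0) ^ (m + 1 + k) := ih hk' (m + 1)
      _ = ((W 0)ᵀ * W 0) ^ (m + (k + 1)) := by ring_nf

/-- if all adjacent pairs of layers are balanced, then `W_1ᵀ W_1` is the unique
positive semidefinite `L`-th root of `Jᵀ J`, where `J = W_L ⋯ W_1`; in particular
`(Jᵀ J)^{1/L} = W_1ᵀ W_1`. -/
theorem first_layer_is_unique_psd_root {d : ℕ → ℕ} {L : ℕ} (hL : 1 ≤ L)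
    (W : (l : ℕ) → Matrix (Fin (d (l + 1))) (Fin (d l)) ℝ)
    (hbal : ∀ l, l + 1 < L → W l * (W l)ᵀ = (W (l + 1))ᵀ * W (l + 1)) :
    ((W 0)ᵀ * W 0).PosSemidef ∧
    ((W 0)ᵀ * W 0) ^ L = (layerProd W L)ᵀ * layerProd W L ∧
    ∀ B : Matrix (Fin (d 0)) (Fin (d 0)) ℝ,
      B.PosSemidef → B ^ L = (layerProd W L)ᵀ * layerProd W L → B = (W 0)ᵀ * W 0 := by
  have hpsd : ((W 0)ᵀ * W 0).PosSemidef := by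
    have := Matrix.posSemidef_conjTranspose_mul_self (W 0)
    rwa [Matrix.conjTranspose_eq_transpose_of_trivial] at this
  obtain ⟨L', rfl⟩ : ∃ L', L = L' + 1 := ⟨L - 1, (Nat.succ_pred_eq_of_pos hL).symm⟩
  have hpow : ((W 0)ᵀ * W 0) ^ (L' + 1) = (layerProd W (L' + 1))ᵀ * layerProd W (L' + 1) := by
    have h := layerProd_key W hbal L' (Nat.lt_succ_self L') 1
    rw [add_comm 1 L'] at h
    show _ = (W L' * layerProd W L')ᵀ * (W L' * layerProd W L')
    rw [Matrix.transpose_mul, Matrix.mul_assoc, ← Matrix.mul_assoc ((W L')ᵀ),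
      ← pow_one ((W L')ᵀ * W L'), ← Matrix.mul_assoc, h]
  refine ⟨hpsd, hpow, fun B hB hBpow => ?_⟩
  have hAB : B ^ (L' + 1) = ((W 0)ᵀ * W 0) ^ (L' + 1) := by rw [hBpow, hpow]
  calc B = cfc (fun x : ℝ => |x| ^ (((L' + 1 : ℕ) : ℝ)⁻¹)) (B ^ (L' + 1)) :=
        (psd_pow_root_cfc hL hB).symm
    _ = cfc (fun x : ℝ => |x| ^ (((L' + 1 : ℕ) : ℝ)⁻¹)) (((W 0)ᵀ * W 0) ^ (L' + 1)) := by
        rw [hAB]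
    _ = (W 0)ᵀ * W 0 := psd_pow_root_cfc hL hpsd
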